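/- Let S = (u_j)_{j∈ℤ} be the dk-periodic interlaced arithmetic progression IAP(A, D) over ℤ/mℤ with k-tuples A = (a_0,...,a_{k-1}) and D = (d_0,...,d_{k-1}). The first period (u_j)_{j=0}^{dk-1} is antisymmetric if and only if d_r = a_r + a_{k-1-r} for all r ∈ {0,...,k-1}. -/
import Mathlib


/-- The `k`-interlaced arithmetic progression `IAP(A,D)` over `ℤ/mℤ`:
`u (qk + r) = a_r + q·d_r` for `q ∈ ℤ` and `r ∈ {0,…,k-1}`. -/
def iapSeq (m k : ℕ) (a d : ℕ → ZMod m) : ℤ → ZMod m :=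
  fun j => a (j % (k : ℤ)).toNat + ((j / (k : ℤ) : ℤ) : ZMod m) * d (j % (k : ℤ)).toNat

lemma iap_eval (m k : ℕ) (hk : 0 < k) (a d : ℕ → ZMod m) (q : ℤ) (r : ℕ) (hr : r < k) :
    iapSeq m k a d (q * k + r) = a r + (q : ZMod m) * d r := by
  have hk' : (0:ℤ) < k := by exact_mod_cast hk
  have hmod : (q * k + r) % (k : ℤ) = r := by
    rw [add_comm, Int.add_mul_emod_self_right]
    exact Int.emod_eq_of_lt (by positivity) (by exact_mod_cast hr)
  have hdiv : (q * k + r) / (k : ℤ) = q := by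
    rw [add_comm, Int.add_mul_ediv_right _ _ (ne_of_gt hk'),
      Int.ediv_eq_zero_of_lt (by positivity) (by exact_mod_cast hr), zero_add]
  simp [iapSeq, hmod, hdiv]

/-- For a `ck`-periodic `IAP(A,D)`, the first period `(u_j)_{j=0}^{ck-1}` is
antisymmetric iff `d_r = a_r + a_{k-1-r}` for all `r < k`. -/
theorem iap_antisymmetric_first_period (m k c : ℕ) (hm : 0 < m) (hk : 0 < k) (hc : 0 < c)
    (a d : ℕ → ZMod m)
    (hper : ∀ j : ℤ, iapSeq m k a d (j + c * k) = iapSeq m k a d j) :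
    (∀ j < c * k, iapSeq m k a d ((c * k - 1 - j : ℕ) : ℤ) = -iapSeq m k a d (j : ℤ)) ↔
      (∀ r < k, d r = a r + a (k - 1 - r)) := by
  -- periodicity gives c * d r = 0
  have hd0 : ∀ r < k, (c : ZMod m) * d r = 0 := by
    intro r hr
    have h1 := hper (r : ℤ)
    have e1 : ((r : ℤ) + c * k) = (c : ℤ) * k + r := by ring
    rw [e1, iap_eval m k hk a d c r hr] at h1
    have e2 : ((r : ℤ)) = (0 : ℤ) * k + r := by ring
    rw [e2, iap_eval m k hk a d 0 r hr] at h1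
    push_cast at h1
    linear_combination h1
  -- a key evaluation of antisymmetry condition at `j = q*k + r`
  have key : ∀ q r : ℕ, q < c → r < k →
      iapSeq m k a d ((c * k - 1 - (q * k + r) : ℕ) : ℤ)
        = a (k - 1 - r) + ((c - 1 - q : ℕ) : ZMod m) * d (k - 1 - r) := by
    intro q r hq hr
    have hsum : (c - 1 - q) * k + (k - 1 - r) + (q * k + r) + 1 = c * k := by
      have h1 : c - 1 - q + q + 1 = c := by omega
      have h2 : (k - 1 - r) + r + 1 = k := by omega
      calc (c - 1 - q) * k + (k - 1 - r) + (q * k + r) + 1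
          = (c - 1 - q + q) * k + ((k - 1 - r) + r + 1) := by ring
        _ = (c - 1 - q + q) * k + k := by rw [h2]
        _ = (c - 1 - q + q + 1) * k := by ring
        _ = c * k := by rw [h1]
    have hidx : c * k - 1 - (q * k + r) = (c - 1 - q) * k + (k - 1 - r) := by omega
    have hcast : ((c * k - 1 - (q * k + r) : ℕ) : ℤ)
        = ((c - 1 - q : ℕ) : ℤ) * k + ((k - 1 - r : ℕ) : ℤ) := by
      rw [hidx]; push_cast; ring
    rw [hcast, iap_eval m k hk a d _ _ (by omega)]
    push_cast
    ring
  constructor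
  · intro h r hr
    have hr' : k - 1 - r < k := by omega
    have hlt : k - 1 - r < c * k := by
      calc k - 1 - r < k := hr'
        _ ≤ c * k := Nat.le_mul_of_pos_left k hc
    have h1 := h (k - 1 - r) hlt
    have e0 : ((k - 1 - r : ℕ) : ℤ) = (0 : ℤ) * k + (k - 1 - r : ℕ) := by ring
    have e1 : c * k - 1 - (k - 1 - r) = c * k - 1 - (0 * k + (k - 1 - r)) := by ring_nf
    rw [e1, key 0 (k - 1 - r) hc hr', e0, iap_eval m k hk a d 0 _ hr'] at h1
    have hrr : k - 1 - (k - 1 - r) = r := by omega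
    rw [hrr] at h1
    have hdr := hd0 r hr
    have hc1 : ((c - 1 - 0 : ℕ) : ZMod m) = (c : ZMod m) - 1 := by
      have : c - 1 - 0 = c - 1 := by omega
      rw [this, Nat.cast_sub hc, Nat.cast_one]
    rw [hc1] at h1
    push_cast at h1
    linear_combination hdr - h1
  · intro h j hj
    set q := j / k with hqdef
    set r := j % k with hrdef
    have hr : r < k := Nat.mod_lt _ hk
    have hjqr : j = q * k + r := by
      rw [hqdef, hrdef]; exact (Nat.div_add_mod' j k).symm
    have hq : q < c := by
      by_contra hcon
      push_neg at hcon
      have : c * k ≤ q * k := Nat.mul_le_mul_right k hcon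
      omega
    have hr' : k - 1 - r < k := by omega
    rw [hjqr, key q r hq hr]
    have ej : ((q * k + r : ℕ) : ℤ) = (q : ℤ) * k + (r : ℕ) := by push_cast; ring
    rw [ej, iap_eval m k hk a d q r hr]
    have hdkr : d (k - 1 - r) = a (k - 1 - r) + a r := by
      have := h (k - 1 - r) hr'
      rwa [show k - 1 - (k - 1 - r) = r by omega] at this
    have hdr : d r = a r + a (k - 1 - r) := h r hr
    have hd0' := hd0 (k - 1 - r) hr'
    rw [hdkr] at hd0'
    have hcq : ((c - 1 - q : ℕ) : ZMod m) = (c : ZMod m) - 1 - q := by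
      rw [Nat.cast_sub (by omega), Nat.cast_sub hc, Nat.cast_one]
    rw [hcq, hdkr, hdr]
    push_cast
    linear_combination hd0'
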